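/- A perfect matching M is Pareto optimal for a complete strict preference profile ≻ if and only if there exists a permutation σ of the agents such that M equals the serial dictatorship matching SD_≻(σ). -/

import Mathlib

/-!
A house allocation instance has agents `Fin n` and houses `Fin n`.  The preference
profile is given by rank functions: `P a : Fin n ≃ Fin n` sends each house to its
(0-based) rank in agent `a`'s strict linear order, so `h ≻_a h'` iff `P a h < P a h'`.
A matching is a bijection, modelled as `M : Equiv.Perm (Fin n)` sending agents to houses.
-/

/-- `M'` dominates `M`: every agent weakly prefers its house under `M'`
(smaller rank is better) and some agent strictly prefers it. -/
def Dominates {n : ℕ} (P : Fin n → (Fin n ≃ Fin n)) (M' M : Equiv.Perm (Fin n)) : Prop :=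
  (∀ a, P a (M' a) ≤ P a (M a)) ∧ ∃ a, P a (M' a) < P a (M a)

/-- `M` is Pareto optimal: no matching dominates it. -/
def ParetoOptimal {n : ℕ} (P : Fin n → (Fin n ≃ Fin n)) (M : Equiv.Perm (Fin n)) : Prop :=
  ¬ ∃ M' : Equiv.Perm (Fin n), Dominates P M' M

/-- `IsSD P σ M` says that `M` is the serial dictatorship matching `SD_≻(σ)`:
at every step `i` agent `σ i` is matched to the house it most prefers among the
houses not matched to `σ 0, …, σ (i-1)`.  Since `M` is a bijection, those remaining
houses are exactly `M (σ j)` for `j ≥ i`, so the condition says that for all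
`i ≤ j`, agent `σ i` weakly prefers `M (σ i)` to `M (σ j)`. -/
def IsSD {n : ℕ} (P : Fin n → (Fin n ≃ Fin n)) (σ M : Equiv.Perm (Fin n)) : Prop :=
  ∀ i j : Fin n, i ≤ j → P (σ i) (M (σ i)) ≤ P (σ i) (M (σ j))

theorem exists_top_agent {n : ℕ} (P : Fin n → (Fin n ≃ Fin n)) (M : Equiv.Perm (Fin n))
    (hM : ParetoOptimal P M) (S : Finset (Fin n)) (hS : S.Nonempty) :
    ∃ a ∈ S, ∀ b ∈ S, P a (M a) ≤ P a (M b) := by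
  classical
  by_contra hcon
  push_neg at hcon
  choose f hf1 hf2 using hcon
  set F : Fin n → Fin n := fun a => if h : a ∈ S then f a h else a with hF
  have hFS : ∀ a ∈ S, F a ∈ S := fun a ha => by simp [hF, ha, hf1]
  have hFlt : ∀ a ∈ S, P a (M (F a)) < P a (M a) := fun a ha => by simp [hF, ha, hf2]
  obtain ⟨a0, ha0⟩ := hS
  obtain ⟨i, j, hij, heq⟩ := Finite.exists_ne_map_eq_of_infinite (fun m : ℕ => F^[m] a0)
  wlog hlt : i < j generalizing i j
  · exact this j i hij.symm heq.symm (by omega)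
  set b := F^[i] a0 with hb
  set p := j - i with hp
  have hp1 : 1 ≤ p := by omega
  have hpb : F^[p] b = b := by
    simp only [hb, ← Function.iterate_add_apply]
    have hpi : p + i = j := by omega
    rw [hpi]; exact heq.symm
  set C : Set (Fin n) := Set.range (fun m : ℕ => F^[m] b) with hC
  have hbC : b ∈ C := ⟨0, rfl⟩
  have hCF : ∀ x ∈ C, F x ∈ C := by
    rintro x ⟨m, rfl⟩
    exact ⟨m+1, by simp [Function.iterate_succ_apply']⟩
  have hCper : ∀ x ∈ C, F^[p] x = x := by
    rintro x ⟨m, rfl⟩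
    show F^[p] (F^[m] b) = F^[m] b
    rw [← Function.iterate_add_apply, Nat.add_comm, Function.iterate_add_apply, hpb]
  have horb : ∀ (x : Fin n), x ∈ S → ∀ m, F^[m] x ∈ S := by
    intro x hx m
    induction m with
    | zero => simpa
    | succ k ih => rw [Function.iterate_succ_apply']; exact hFS _ ih
  have hbS : b ∈ S := horb a0 ha0 i
  have hCS : ∀ x ∈ C, x ∈ S := by rintro x ⟨m, rfl⟩; exact horb b hbS m
  have key : ∀ x ∈ C, F^[p-1] (F x) = x := by
    intro x hx
    rw [← Function.iterate_succ_apply]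
    have hps : (p - 1).succ = p := by omega
    rw [hps]; exact hCper x hx
  have hinjC : ∀ x ∈ C, ∀ y ∈ C, F x = F y → x = y := by
    intro x hx y hy hxy
    have := key x hx
    rw [hxy, key y hy] at this
    exact this.symm
  set g : Fin n → Fin n := fun x => if x ∈ C then F x else x with hg
  have hginj : Function.Injective g := by
    intro x y hxy
    by_cases hx : x ∈ C <;> by_cases hy : y ∈ C <;> simp only [hg, hx, hy, if_pos, if_neg,
      if_true, if_false] at hxy
    · exact hinjC x hx y hy hxy
    · exact absurd (hxy ▸ hCF x hx) hy
    · exact absurd (hxy ▸ hCF y hy) hx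
    · exact hxy
  have hgbij : Function.Bijective g := Finite.injective_iff_bijective.mp hginj
  apply hM
  refine ⟨(Equiv.ofBijective g hgbij).trans M, ?_, b, ?_⟩
  · intro a
    simp only [Equiv.trans_apply, Equiv.ofBijective_apply]
    by_cases ha : a ∈ C
    · simp only [hg, if_pos ha]
      exact le_of_lt (hFlt a (hCS a ha))
    · simp [hg, if_neg ha]
  · simp only [Equiv.trans_apply, Equiv.ofBijective_apply, hg, if_pos hbC]
    exact hFlt b hbS

theorem exists_sd_list {n : ℕ} (P : Fin n → (Fin n ≃ Fin n)) (M : Equiv.Perm (Fin n))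
    (hM : ParetoOptimal P M) (S : Finset (Fin n)) :
    ∃ l : List (Fin n), l.Nodup ∧ l.toFinset = S ∧
      ∀ (i j : ℕ) (hi : i < l.length) (hj : j < l.length), i ≤ j →
        P (l.get ⟨i, hi⟩) (M (l.get ⟨i, hi⟩)) ≤ P (l.get ⟨i, hi⟩) (M (l.get ⟨j, hj⟩)) := by
  classical
  induction S using Finset.strongInduction with
  | _ S ih =>
    rcases S.eq_empty_or_nonempty with rfl | hS
    · exact ⟨[], by simp, by simp, by intro i j hi hj _; simp at hi⟩
    · obtain ⟨a, haS, hatop⟩ := exists_top_agent P M hM S hS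
      obtain ⟨l, hnd, htf, hsd⟩ := ih (S.erase a) (Finset.erase_ssubset haS)
      have hanl : a ∉ l := by
        intro ha
        have : a ∈ S.erase a := htf ▸ List.mem_toFinset.mpr ha
        simp at this
      refine ⟨a :: l, by simp [hnd, hanl], ?_, ?_⟩
      · simp [htf, Finset.insert_erase haS]
      · intro i j hi hj hij
        rcases i with _ | i <;> rcases j with _ | j
        · exact le_refl _
        · have hj' : j < l.length := by simpa using hj
          show P a (M a) ≤ P a (M (l.get ⟨j, hj'⟩))
          apply hatop
          have hmem : l.get ⟨j, hj'⟩ ∈ l := l.get_mem ⟨j, hj'⟩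
          have := htf ▸ List.mem_toFinset.mpr hmem
          exact Finset.mem_of_mem_erase this
        · omega
        · exact hsd i j (by simpa using hi) (by simpa using hj) (by omega)

/-- A perfect matching is Pareto optimal iff it is the outcome of serial dictatorship
for some permutation of the agents. -/
theorem paretoOptimal_iff_exists_serialDictatorship {n : ℕ}
    (P : Fin n → (Fin n ≃ Fin n)) (M : Equiv.Perm (Fin n)) :
    ParetoOptimal P M ↔ ∃ σ : Equiv.Perm (Fin n), IsSD P σ M := by
  classical
  constructor
  · intro hM
    obtain ⟨l, hnd, htf, hsd⟩ := exists_sd_list P M hM Finset.univ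
    have hlen : l.length = n := by
      have := List.toFinset_card_of_nodup hnd
      rw [htf] at this
      simpa using this.symm
    set σfun : Fin n → Fin n := fun i => l.get ⟨i, by rw [hlen]; exact i.isLt⟩ with hσf
    have hinj : Function.Injective σfun := by
      intro x y hxy
      have := (List.nodup_iff_injective_get).mp hnd
      have h2 : (⟨(x : ℕ), by rw [hlen]; exact x.isLt⟩ : Fin l.length) =
          ⟨(y : ℕ), by rw [hlen]; exact y.isLt⟩ := this hxy
      exact Fin.ext (by simpa using congrArg Fin.val h2)
    refine ⟨Equiv.ofBijective σfun (Finite.injective_iff_bijective.mp hinj), ?_⟩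
    intro i j hij
    simp only [Equiv.ofBijective_apply]
    exact hsd i j _ _ hij
  · rintro ⟨σ, hσ⟩ ⟨M', hle, a0, hlt0⟩
    set T : Finset (Fin n) := Finset.univ.filter (fun i => M' (σ i) ≠ M (σ i)) with hT
    have hTne : T.Nonempty := by
      refine ⟨σ.symm a0, ?_⟩
      simp only [hT, Finset.mem_filter, Finset.mem_univ, true_and, Equiv.apply_symm_apply]
      intro h
      rw [h] at hlt0
      exact lt_irrefl _ hlt0
    obtain ⟨i, hiT, hmin⟩ := T.exists_min_image id hTne
    have heqlt : ∀ j, j < i → M' (σ j) = M (σ j) := by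
      intro j hj
      by_contra hne
      exact absurd (hmin j (by simp [hT, hne])) (not_le.mpr hj)
    set k := σ.symm (M.symm (M' (σ i))) with hk
    have hkeq : M (σ k) = M' (σ i) := by simp [hk]
    have hik : i ≤ k := by
      by_contra h
      push_neg at h
      have h1 : M' (σ k) = M' (σ i) := (heqlt k h).trans hkeq
      have : k = i := σ.injective (M'.injective h1)
      exact absurd this (ne_of_lt h)
    have h1 : P (σ i) (M (σ i)) ≤ P (σ i) (M' (σ i)) := hkeq ▸ hσ i k hik
    have h2 : P (σ i) (M' (σ i)) ≤ P (σ i) (M (σ i)) := hle (σ i)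
    have heq : M' (σ i) = M (σ i) := (P (σ i)).injective (le_antisymm h2 h1)
    simp only [hT, Finset.mem_filter, Finset.mem_univ, true_and] at hiT
    exact hiT heq
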